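/- Let V be a vector space of finite dimension r over a field E, and let B ⊆ End_E(V) be a semisimple E-subalgebra containing Id_V with B ≠ End_E(V). Then there exists a proper E-vector subspace W of V such that no b ∈ B satisfies b(V) = W. -/
import Mathlib

/-- An endomorphism of a vector space sending every vector to a scalar multiple of itself
is a global scalar. -/
lemma scalar_of_stab {E V : Type} [Field E] [AddCommGroup V] [Module E V]
    (c : Module.End E V) (h : ∀ v : V, ∃ a : E, c v = a • v) :
    ∃ a : E, ∀ v : V, c v = a • v := by
  rcases subsingleton_or_nontrivial V with hV | hV
  · exact ⟨0, fun v => Subsingleton.elim _ _⟩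
  obtain ⟨v0, hv0⟩ := exists_ne (0 : V)
  obtain ⟨a0, ha0⟩ := h v0
  refine ⟨a0, fun v => ?_⟩
  rcases eq_or_ne v 0 with rfl | hv
  · simp
  obtain ⟨a, ha⟩ := h v
  by_cases hdep : v ∈ Submodule.span E {v0}
  · obtain ⟨t, ht⟩ := Submodule.mem_span_singleton.mp hdep
    rw [← ht, map_smul, ha0, smul_comm]
  · obtain ⟨a', ha'⟩ := h (v + v0)
    have h4 : a • v + a0 • v0 = a' • v + a' • v0 := by
      rw [← ha, ← ha0, ← map_add, ha', smul_add]
    have key : (a' - a) • v = (a0 - a') • v0 := by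
      rw [sub_smul, sub_smul, sub_eq_sub_iff_add_eq_add, add_comm (a0 • v0)]
      exact h4.symm
    have haa : a' = a := by
      by_contra hne
      apply hdep
      have h5 : v = ((a' - a)⁻¹ * (a0 - a')) • v0 := by
        calc v = (a' - a)⁻¹ • ((a' - a) • v) := by
                rw [smul_smul, inv_mul_cancel₀ (sub_ne_zero.mpr hne), one_smul]
          _ = (a' - a)⁻¹ • ((a0 - a') • v0) := by rw [key]
          _ = ((a' - a)⁻¹ * (a0 - a')) • v0 := by rw [smul_smul]
      rw [h5]
      exact Submodule.smul_mem _ _ (Submodule.mem_span_singleton_self v0)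
    have h6 : (a0 - a') • v0 = 0 := by rw [← key, haa, sub_self, zero_smul]
    have h7 : a0 = a' := by
      rcases smul_eq_zero.mp h6 with h' | h'
      · exact sub_eq_zero.mp h'
      · exact absurd h' hv0
    rw [ha, ← haa, ← h7]

theorem exists_subspace_not_an_image (E V : Type) [Field E] [AddCommGroup V] [Module E V]
    [FiniteDimensional E V] (B : Subalgebra E (Module.End E V))
    (hss : IsSemisimpleRing B) (hB : B ≠ ⊤) :
    ∃ W : Submodule E V, W ≠ ⊤ ∧ ∀ b ∈ B, LinearMap.range b ≠ W := by
  by_contra hcon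
  push_neg at hcon
  -- every subspace is the range of an element of `B`
  have hall : ∀ W : Submodule E V, ∃ b ∈ B, LinearMap.range b = W := by
    intro W
    rcases eq_or_ne W ⊤ with rfl | hW
    · exact ⟨1, one_mem B, LinearMap.range_eq_top.mpr fun x => ⟨x, rfl⟩⟩
    · exact hcon W hW
  -- `V` is nontrivial
  have hVnt : Nontrivial V := by
    by_contra h
    rw [not_nontrivial_iff_subsingleton] at h
    apply hB
    ext x
    simp only [Algebra.mem_top, iff_true]
    have h0 := B.zero_mem
    rwa [Subsingleton.elim (0 : Module.End E V) x] at h0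
  -- everything commuting with `B` is a scalar
  have hcent : ∀ c : Module.End E V, (∀ b ∈ B, b * c = c * b) →
      ∃ a : E, ∀ v, c v = a • v := by
    intro c hc
    apply scalar_of_stab
    intro v
    obtain ⟨b, hbB, hbr⟩ := hall (Submodule.span E {v})
    have hv : v ∈ LinearMap.range b := by
      rw [hbr]; exact Submodule.mem_span_singleton_self v
    obtain ⟨u, hu⟩ := hv
    have hcv : c v ∈ Submodule.span E {v} := by
      have h1 : c (b u) = b (c u) := by
        have h2 := hc b hbB
        have h3 : (b * c) u = (c * b) u := by rw [h2]
        simpa [Module.End.mul_apply] using h3.symm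
      rw [hu] at h1
      rw [h1, ← hbr]
      exact LinearMap.mem_range_self b (c u)
    obtain ⟨a, ha⟩ := Submodule.mem_span_singleton.mp hcv
    exact ⟨a, ha.symm⟩
  -- `V` as a `B`-module
  letI : Module B V := Module.compHom V (B.val.toRingHom)
  have hsmul : ∀ (b : B) (x : V), b • x = (b : Module.End E V) x := fun _ _ => rfl
  haveI := hss
  -- transitivity: `B` carries any nonzero vector to any vector
  have htrans : ∀ v : V, v ≠ 0 → ∀ w : V, ∃ b ∈ B, b v = w := by
    intro v hv w
    set p := Submodule.span B {v} with hp_def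
    obtain ⟨q, hq⟩ := exists_isCompl p
    set π0 := Submodule.linearProjOfIsCompl p q hq with hπ0_def
    set π : V →ₗ[B] V := p.subtype.comp π0 with hπ_def
    have hπE : ∀ (a : E) (x : V), π (a • x) = a • π x := by
      intro a x
      have h1 : a • x = (⟨algebraMap E (Module.End E V) a, B.algebraMap_mem a⟩ : B) • x := by
        rw [hsmul]; simp [Module.algebraMap_end_apply]
      have h2 : a • π x
          = (⟨algebraMap E (Module.End E V) a, B.algebraMap_mem a⟩ : B) • π x := by
        rw [hsmul]; simp [Module.algebraMap_end_apply]
      rw [h1, map_smul, h2]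
    let πE : Module.End E V :=
      { toFun := π, map_add' := fun x y => map_add π x y, map_smul' := hπE }
    have hπE_apply : ∀ x, πE x = π x := fun _ => rfl
    have hcomm : ∀ b ∈ B, b * πE = πE * b := by
      intro b hb
      ext x
      show b (πE x) = πE (b x)
      have h1 : π ((⟨b, hb⟩ : B) • x) = (⟨b, hb⟩ : B) • π x := map_smul π _ _
      rw [hsmul, hsmul] at h1
      rw [hπE_apply, hπE_apply, h1]
    obtain ⟨a, ha⟩ := hcent πE hcomm
    have hvp : v ∈ p := Submodule.mem_span_singleton_self v
    have hπv : π v = v := by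
      have h1 : π0 ((⟨v, hvp⟩ : p) : V) = ⟨v, hvp⟩ :=
        Submodule.linearProjOfIsCompl_apply_left hq ⟨v, hvp⟩
      show p.subtype (π0 v) = v
      rw [show (v : V) = ((⟨v, hvp⟩ : p) : V) from rfl, h1]
      rfl
    have ha1 : a = 1 := by
      have h1 : a • v = v := by rw [← ha v, hπE_apply, hπv]
      by_contra hne
      have : (a - 1) • v = 0 := by rw [sub_smul, one_smul, h1, sub_self]
      rcases smul_eq_zero.mp this with h' | h'
      · exact hne (by rwa [sub_eq_zero] at h')
      · exact hv h'
    have hptop : p = ⊤ := by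
      rw [eq_top_iff]
      intro x _
      have h1 : π x = x := by
        have h2 := ha x
        rw [hπE_apply, ha1, one_smul] at h2
        exact h2
      rw [← h1]
      exact (π0 x).2
    have hw : w ∈ p := hptop ▸ Submodule.mem_top
    obtain ⟨b, hb⟩ := Submodule.mem_span_singleton.mp hw
    refine ⟨b, b.2, ?_⟩
    rw [← hsmul]; exact hb
  -- a rank-one element of `B` with range `span {v0}`
  obtain ⟨v0, hv0⟩ := exists_ne (0 : V)
  obtain ⟨b0, hb0B, hb0r⟩ := hall (Submodule.span E {v0})
  obtain ⟨ψ, hψ⟩ : ∃ ψ : Module.Dual E V, ψ v0 = 1 := by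
    have h1 : ¬∀ φ : Module.Dual E V, φ v0 = 0 := by
      rw [Module.forall_dual_apply_eq_zero_iff E v0]; exact hv0
    push_neg at h1
    obtain ⟨φ, hφ⟩ := h1
    exact ⟨(φ v0)⁻¹ • φ, by simp [inv_mul_cancel₀ hφ]⟩
  set f : Module.Dual E V := ψ.comp b0 with hf_def
  have hb0 : ∀ x, b0 x = f x • v0 := by
    intro x
    have h1 : b0 x ∈ Submodule.span E {v0} := by
      rw [← hb0r]; exact LinearMap.mem_range_self b0 x
    obtain ⟨a, ha⟩ := Submodule.mem_span_singleton.mp h1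
    have h2 : f x = a := by
      rw [hf_def]
      simp only [LinearMap.coe_comp, Function.comp_apply]
      rw [← ha, map_smul, hψ, smul_eq_mul, mul_one]
    rw [h2, ha]
  obtain ⟨y0, hy0⟩ : ∃ y, b0 y = v0 := by
    have : v0 ∈ LinearMap.range b0 := by
      rw [hb0r]; exact Submodule.mem_span_singleton_self v0
    exact this
  have hfy0 : f y0 = 1 := by rw [hf_def]; simp [hy0, hψ]
  -- every dual functional has the form `f ∘ b` for some `b ∈ B`
  have hfun : ∀ φ : Module.Dual E V, ∃ b ∈ B, f.comp b = φ := by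
    intro φ
    set S : Submodule E (Module.Dual E V) :=
      (Subalgebra.toSubmodule B).map (LinearMap.llcomp E V V E f) with hS_def
    have hSspan : Submodule.span E (S : Set (Module.Dual E V)) = S := Submodule.span_eq S
    have hStop : S = ⊤ := by
      rw [← hSspan]
      apply Submodule.span_eq_top_of_ne_zero
      intro z hz
      obtain ⟨b, hbB, hb⟩ := htrans z hz y0
      refine ⟨f.comp b, ?_, ?_⟩
      · exact ⟨b, hbB, rfl⟩
      · simp only [LinearMap.coe_comp, Function.comp_apply]
        rw [hb, hfy0]; exact one_ne_zero
    have hφS : φ ∈ S := hStop ▸ Submodule.mem_top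
    obtain ⟨b, hbB, hb⟩ := hφS
    exact ⟨b, hbB, hb⟩
  -- all rank-one endomorphisms lie in `B`
  have hrank1 : ∀ (φ : Module.Dual E V) (w : V), ∃ b ∈ B, ∀ x, b x = φ x • w := by
    intro φ w
    obtain ⟨b2, hb2B, hb2⟩ := hfun φ
    obtain ⟨b1, hb1B, hb1⟩ := htrans v0 hv0 w
    refine ⟨b1 * b0 * b2, mul_mem (mul_mem hb1B hb0B) hb2B, fun x => ?_⟩
    have h1 : (b1 * b0 * b2) x = b1 (b0 (b2 x)) := rfl
    rw [h1, hb0 (b2 x), map_smul, hb1]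
    have h2 : f (b2 x) = φ x := by rw [← hb2]; rfl
    rw [h2]
  -- conclude `B = ⊤`, a contradiction
  apply hB
  rw [eq_top_iff]
  intro g _
  let bV := Module.finBasis E V
  choose bb hbbB hbb using fun i => hrank1 (bV.coord i) (g (bV i))
  have hg : g = ∑ i, bb i := by
    ext x
    rw [LinearMap.sum_apply]
    simp_rw [hbb]
    conv_lhs => rw [← bV.sum_repr x]
    rw [map_sum]
    refine Finset.sum_congr rfl fun i _ => ?_
    rw [map_smul, Module.Basis.coord_apply]
  rw [hg]
  exact Subalgebra.sum_mem B fun i _ => hbbB i
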